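/- Let a, b ∈ ℤ² have coprime coordinates and satisfy det(a, b) > 0. Suppose c₀, …, c_{n+1} and c′₀, …, c′_{n′+1} are two finite sequences of elements of ℤ² such that c₀ = c′₀ = a, c_{n+1} = b, c′_{n′+1} = b, det(c_j, c_{j+1}) = 1 for all 0 ≤ j ≤ n and det(c′_j, c′_{j+1}) = 1 for all 0 ≤ j ≤ n′, and det(c_{k−1}, c_{k+1}) > 1 for all 1 ≤ k ≤ n and det(c′_{k−1}, c′_{k+1}) > 1 for all 1 ≤ k ≤ n′. Then n = n′ and c_j = c′_j for all 0 ≤ j ≤ n+1. -/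

import Mathlib

/-- The 2×2 determinant of two vectors in `ℤ × ℤ`. -/
def det2 (u v : ℤ × ℤ) : ℤ := u.1 * v.2 - u.2 * v.1

lemma three1 (x y z : ℤ × ℤ) (hxy : det2 x y = 1) (hyz : det2 y z = 1) :
    z.1 + x.1 = det2 x z * y.1 := by
  unfold det2 at *
  linear_combination (-z.1) * hxy + (-x.1) * hyz

lemma three2 (x y z : ℤ × ℤ) (hxy : det2 x y = 1) (hyz : det2 y z = 1) :
    z.2 + x.2 = det2 x z * y.2 := by
  unfold det2 at *
  linear_combination (-z.2) * hxy + (-x.2) * hyz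

lemma det2_add (x z y b : ℤ × ℤ) (β : ℤ) (hh1 : z.1 + x.1 = β * y.1)
    (hh2 : z.2 + x.2 = β * y.2) :
    det2 z b + det2 x b = β * det2 y b := by
  unfold det2; linear_combination b.2 * hh1 - b.1 * hh2

lemma pluecker1 (u v w : ℤ × ℤ) :
    det2 u v * w.1 - det2 u w * v.1 + det2 v w * u.1 = 0 := by unfold det2; ring

lemma pluecker2 (u v w : ℤ × ℤ) :
    det2 u v * w.2 - det2 u w * v.2 + det2 v w * u.2 = 0 := by unfold det2; ring

lemma coprime_of_det (a u : ℤ × ℤ) (h : det2 a u = 1) : Int.gcd u.1 u.2 = 1 := by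
  rw [← Int.isCoprime_iff_gcd_eq_one]
  refine ⟨-a.2, a.1, ?_⟩
  unfold det2 at h; linarith

lemma chainE (b : ℤ × ℤ) (n : ℕ) (c : ℕ → ℤ × ℤ) (hcl : c (n + 1) = b)
    (h1 : ∀ j, j ≤ n → det2 (c j) (c (j + 1)) = 1)
    (h2 : ∀ k, 1 ≤ k → k ≤ n → 1 < det2 (c (k - 1)) (c (k + 1))) :
    ∀ i, i ≤ n → 1 ≤ det2 (c (n - i)) b - det2 (c (n - i + 1)) b ∧
      (i + 1 : ℤ) ≤ det2 (c (n - i)) b := by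
  intro i
  induction i with
  | zero =>
    intro _
    have h := h1 n le_rfl
    rw [hcl] at h
    have hbb : det2 b b = 0 := by unfold det2; ring
    simp only [Nat.sub_zero]
    rw [hcl, hbb, h]
    norm_num
  | succ i ih =>
    intro hi
    obtain ⟨ihd, ihe⟩ := ih (by omega)
    have hj1 : n - i = n - (i + 1) + 1 := by omega
    rw [hj1] at ihd ihe
    set j := n - (i + 1) with hj
    have hβ := h2 (j + 1) (by omega) (by omega)
    have hjj : j + 1 - 1 = j := by omega
    rw [hjj] at hβ
    have hd1 := h1 j (by omega)
    have hd2 := h1 (j + 1) (by omega)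
    have t1 := three1 (c j) (c (j + 1)) (c (j + 1 + 1)) hd1 hd2
    have t2 := three2 (c j) (c (j + 1)) (c (j + 1 + 1)) hd1 hd2
    have hrec := det2_add (c j) (c (j + 1 + 1)) (c (j + 1)) b _ t1 t2
    have hprod : 0 ≤ (det2 (c j) (c (j + 1 + 1)) - 2) * det2 (c (j + 1)) b := by
      apply mul_nonneg
      · linarith
      · have : (0:ℤ) ≤ (i : ℤ) + 1 := by positivity
        linarith
    have key : 1 ≤ det2 (c j) b - det2 (c (j + 1)) b := by nlinarith [hprod, hrec, ihd]
    refine ⟨key, ?_⟩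
    push_cast
    linarith [ihe, key]

lemma chain_unique_aux : ∀ (n : ℕ) (a b : ℤ × ℤ), Int.gcd a.1 a.2 = 1 →
    ∀ (n' : ℕ) (c c' : ℕ → ℤ × ℤ), c 0 = a → c' 0 = a →
    c (n + 1) = b → c' (n' + 1) = b →
    (∀ j, j ≤ n → det2 (c j) (c (j + 1)) = 1) →
    (∀ j, j ≤ n' → det2 (c' j) (c' (j + 1)) = 1) →
    (∀ k, 1 ≤ k → k ≤ n → 1 < det2 (c (k - 1)) (c (k + 1))) →
    (∀ k, 1 ≤ k → k ≤ n' → 1 < det2 (c' (k - 1)) (c' (k + 1))) →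
    n = n' ∧ ∀ j, j ≤ n + 1 → c j = c' j := by
  intro n
  induction n with
  | zero =>
    intro a b ha n' c c' hc0 hc0' hcl hcl' h1 h1' h2 h2'
    have hD : det2 a b = 1 := by have := h1 0 le_rfl; rwa [hc0, hcl] at this
    have hE := (chainE b n' c' hcl' h1' h2' n' le_rfl).2
    rw [Nat.sub_self, hc0', hD] at hE
    have hn' : n' = 0 := by omega
    subst hn'
    refine ⟨rfl, ?_⟩
    intro j hj
    interval_cases j
    · rw [hc0, hc0']
    · rw [hcl, hcl']
  | succ m ih =>
    intro a b ha n' c c' hc0 hc0' hcl hcl' h1 h1' h2 h2'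
    have hEtop := chainE b (m + 1) c hcl h1 h2 (m + 1) le_rfl
    rw [Nat.sub_self, hc0] at hEtop
    obtain ⟨hEtop1, hEtop2⟩ := hEtop
    have h01 : (0:ℕ) + 1 = 1 := rfl
    rw [h01] at hEtop1
    have hD2 : (2:ℤ) ≤ det2 a b := by push_cast at hEtop2; linarith
    have hn' : 1 ≤ n' := by
      by_contra hcon
      have hz : n' = 0 := by omega
      subst hz
      have := h1' 0 le_rfl
      rw [hc0', hcl'] at this
      linarith
    obtain ⟨m', rfl⟩ : ∃ m', n' = m' + 1 := ⟨n' - 1, by omega⟩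
    have hEtop' := chainE b (m' + 1) c' hcl' h1' h2' (m' + 1) le_rfl
    rw [Nat.sub_self, hc0'] at hEtop'
    obtain ⟨hEtop1', hEtop2'⟩ := hEtop'
    rw [h01] at hEtop1'
    have hE1 := (chainE b (m + 1) c hcl h1 h2 m (by omega)).2
    have hidx : m + 1 - m = 1 := by omega
    rw [hidx] at hE1
    have hE1' := (chainE b (m' + 1) c' hcl' h1' h2' m' (by omega)).2
    have hidx' : m' + 1 - m' = 1 := by omega
    rw [hidx'] at hE1'
    have he1pos : (1:ℤ) ≤ det2 (c 1) b := by push_cast at hE1; linarith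
    have he1pos' : (1:ℤ) ≤ det2 (c' 1) b := by push_cast at hE1'; linarith
    -- det2 a (c 1) = 1 and primed version
    have hac1 : det2 a (c 1) = 1 := by have := h1 0 (by omega); rwa [hc0] at this
    have hac1' : det2 a (c' 1) = 1 := by have := h1' 0 (by omega); rwa [hc0'] at this
    -- Plücker: D * c1 = b + e1 * a
    have hP1 := pluecker1 a (c 1) b
    have hP2 := pluecker2 a (c 1) b
    have hP1' := pluecker1 a (c' 1) b
    have hP2' := pluecker2 a (c' 1) b
    rw [hac1] at hP1 hP2
    rw [hac1'] at hP1' hP2'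
    set D := det2 a b with hDdef
    set e1 := det2 (c 1) b with he1def
    set e1' := det2 (c' 1) b with he1def'
    have hdvd1 : D ∣ (e1 - e1') * a.1 := ⟨(c 1).1 - (c' 1).1, by linear_combination hP1 - hP1'⟩
    have hdvd2 : D ∣ (e1 - e1') * a.2 := ⟨(c 1).2 - (c' 1).2, by linear_combination hP2 - hP2'⟩
    obtain ⟨x, y, hxy⟩ := Int.isCoprime_iff_gcd_eq_one.mpr ha
    have hdvdt : D ∣ (e1 - e1') := by
      have hrw : e1 - e1' = x * ((e1 - e1') * a.1) + y * ((e1 - e1') * a.2) := by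
        linear_combination (e1' - e1) * hxy
      rw [hrw]
      exact dvd_add (hdvd1.mul_left x) (hdvd2.mul_left y)
    have ht0 : e1 = e1' := by
      have habs : |e1 - e1'| < D := by
        rw [abs_lt]; constructor <;> linarith
      have := Int.eq_zero_of_abs_lt_dvd hdvdt habs
      linarith
    have hDne : D ≠ 0 := by linarith
    have hc1 : c 1 = c' 1 := by
      have e1eq : D * (c 1).1 = D * (c' 1).1 := by linear_combination hP1' - hP1 + a.1 * ht0
      have e2eq : D * (c 1).2 = D * (c' 1).2 := by linear_combination hP2' - hP2 + a.2 * ht0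
      exact Prod.ext (mul_left_cancel₀ hDne e1eq) (mul_left_cancel₀ hDne e2eq)
    have hIH := ih (c 1) b (coprime_of_det a (c 1) hac1) m'
      (fun j => c (j + 1)) (fun j => c' (j + 1)) rfl hc1.symm hcl hcl'
      (fun j hj => h1 (j + 1) (by omega))
      (fun j hj => h1' (j + 1) (by omega))
      (by
        intro k hk1 hk2
        have hkk : k - 1 + 1 = k := by omega
        simpa [hkk] using h2 (k + 1) (by omega) (by omega))
      (by
        intro k hk1 hk2
        have hkk : k - 1 + 1 = k := by omega
        simpa [hkk] using h2' (k + 1) (by omega) (by omega))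
    obtain ⟨hmm, hjj⟩ := hIH
    refine ⟨by omega, ?_⟩
    intro j hj
    rcases j with _ | i
    · rw [hc0, hc0']
    · exact hjj i (by omega)

theorem chain_unique (a b : ℤ × ℤ)
    (ha : Int.gcd a.1 a.2 = 1) (hb : Int.gcd b.1 b.2 = 1)
    (hab : 0 < det2 a b)
    (n n' : ℕ) (c c' : ℕ → ℤ × ℤ)
    (hc0 : c 0 = a) (hc0' : c' 0 = a)
    (hcl : c (n + 1) = b) (hcl' : c' (n' + 1) = b)
    (h1 : ∀ j, j ≤ n → det2 (c j) (c (j + 1)) = 1)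
    (h1' : ∀ j, j ≤ n' → det2 (c' j) (c' (j + 1)) = 1)
    (h2 : ∀ k, 1 ≤ k → k ≤ n → 1 < det2 (c (k - 1)) (c (k + 1)))
    (h2' : ∀ k, 1 ≤ k → k ≤ n' → 1 < det2 (c' (k - 1)) (c' (k + 1))) :
    n = n' ∧ ∀ j, j ≤ n + 1 → c j = c' j :=
  chain_unique_aux n a b ha n' c c' hc0 hc0' hcl hcl' h1 h1' h2 h2'
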